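/- Let q be a real number with q > 1 and m ≥ 1 an integer. For 1 ≤ k ≤ m define d_k = (1/( q^{2k^2-k} (q^{-2};q^{-2})_{k-1} )) · ( (q^{-2k}; q^{-2})_{m-k} / (q^{-2}; q^{-2})_{m-k} ) · q^{-(m-k)}. Then Σ_{k=1}^{m} d_k = (1/q^m) · Σ_{i=1}^{m} (-1)^{i-1} / ( q^{i(i-1)} (1/q^2; 1/q^2)_{m-i} ). -/

import Mathlib

/-- The q-Pochhammer symbol `(a; Q)_n = ∏_{j=0}^{n-1} (1 - a Q^j)` over the reals. -/
noncomputable def qPoch (a Q : ℝ) (n : ℕ) : ℝ := ∏ j ∈ Finset.range n, (1 - a * Q ^ j)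

namespace Anz

noncomputable def P (Q : ℝ) (n : ℕ) : ℝ := ∏ j ∈ Finset.range n, (1 - Q ^ (j + 1))

lemma qPoch_eq_P (Q : ℝ) (n : ℕ) : qPoch Q Q n = P Q n := by
  unfold qPoch P
  refine Finset.prod_congr rfl fun j _ => ?_
  rw [pow_succ]; ring

lemma P_zero (Q : ℝ) : P Q 0 = 1 := rfl

lemma P_succ (Q : ℝ) (n : ℕ) : P Q (n + 1) = P Q n * (1 - Q ^ (n + 1)) :=
  Finset.prod_range_succ _ _

lemma P_pos {Q : ℝ} (hQ0 : 0 ≤ Q) (hQ1 : Q < 1) (n : ℕ) : 0 < P Q n := by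
  refine Finset.prod_pos fun j _ => ?_
  have : Q ^ (j + 1) < 1 := pow_lt_one₀ hQ0 hQ1 (by omega)
  linarith

lemma P_ne {Q : ℝ} (hQ0 : 0 ≤ Q) (hQ1 : Q < 1) (n : ℕ) : P Q n ≠ 0 :=
  (P_pos hQ0 hQ1 n).ne'

lemma one_sub_ne {Q : ℝ} (hQ0 : 0 ≤ Q) (hQ1 : Q < 1) (n : ℕ) : (1 : ℝ) - Q ^ (n + 1) ≠ 0 := by
  have : Q ^ (n + 1) < 1 := pow_lt_one₀ hQ0 hQ1 (by omega)
  linarith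

lemma durfee {Q : ℝ} (hQ0 : 0 ≤ Q) (hQ1 : Q < 1) :
    ∀ n r : ℕ, ∑ j ∈ Finset.range (n + 1),
      Q ^ (j * (j + r)) / (P Q j * P Q (n - j) * P Q (j + r))
      = 1 / (P Q n * P Q (n + r)) := by
  intro n
  induction n with
  | zero => intro r; simp [P_zero]
  | succ n ih =>
    intro r
    have hne : (1 : ℝ) - Q ^ (n + 1) ≠ 0 := one_sub_ne hQ0 hQ1 n
    have key : (1 - Q ^ (n + 1)) * ∑ j ∈ Finset.range (n + 2),
        Q ^ (j * (j + r)) / (P Q j * P Q (n + 1 - j) * P Q (j + r))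
        = 1 / (P Q n * P Q (n + r)) + Q ^ (n + r + 1) * (1 / (P Q n * P Q (n + r + 1))) := by
      rw [Finset.mul_sum]
      have hsplit : ∀ j ∈ Finset.range (n + 2),
          (1 - Q ^ (n + 1)) * (Q ^ (j * (j + r)) / (P Q j * P Q (n + 1 - j) * P Q (j + r)))
          = (1 - Q ^ (n + 1 - j)) * (Q ^ (j * (j + r)) / (P Q j * P Q (n + 1 - j) * P Q (j + r)))
            + Q ^ (n + 1 - j) * (1 - Q ^ j)
              * (Q ^ (j * (j + r)) / (P Q j * P Q (n + 1 - j) * P Q (j + r))) := by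
        intro j hj
        have hQQ : Q ^ (n + 1 - j) * Q ^ j = Q ^ (n + 1) := by
          rw [← pow_add]; congr 1
          have := Finset.mem_range.mp hj; omega
        linear_combination (Q ^ (j * (j + r)) / (P Q j * P Q (n + 1 - j) * P Q (j + r))) * hQQ
      rw [Finset.sum_congr rfl hsplit, Finset.sum_add_distrib]
      have hA : ∑ j ∈ Finset.range (n + 2),
          (1 - Q ^ (n + 1 - j)) * (Q ^ (j * (j + r)) / (P Q j * P Q (n + 1 - j) * P Q (j + r)))
          = 1 / (P Q n * P Q (n + r)) := by
        rw [Finset.sum_range_succ]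
        have hlast : (1 - Q ^ (n + 1 - (n + 1)))
            * (Q ^ ((n+1) * ((n+1) + r)) / (P Q (n+1) * P Q (n + 1 - (n+1)) * P Q ((n+1) + r))) = 0 := by
          simp
        rw [hlast, add_zero, ← ih r]
        refine Finset.sum_congr rfl fun j hj => ?_
        have hj' : j ≤ n := by have := Finset.mem_range.mp hj; omega
        have h1 : n + 1 - j = (n - j) + 1 := by omega
        rw [h1, P_succ]
        have h2 : (1:ℝ) - Q ^ (n - j + 1) ≠ 0 := one_sub_ne hQ0 hQ1 _
        have p1 := P_ne hQ0 hQ1 j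
        have p2 := P_ne hQ0 hQ1 (n - j)
        have p3 := P_ne hQ0 hQ1 (j + r)
        field_simp
      have hB : ∑ j ∈ Finset.range (n + 2),
          Q ^ (n + 1 - j) * (1 - Q ^ j)
            * (Q ^ (j * (j + r)) / (P Q j * P Q (n + 1 - j) * P Q (j + r)))
          = Q ^ (n + r + 1) * (1 / (P Q n * P Q (n + r + 1))) := by
        rw [Finset.sum_range_succ']
        have h0 : Q ^ (n + 1 - 0) * (1 - Q ^ 0)
            * (Q ^ (0 * (0 + r)) / (P Q 0 * P Q (n + 1 - 0) * P Q (0 + r))) = 0 := by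
          simp
        rw [h0, add_zero]
        have hterm : ∀ i ∈ Finset.range (n + 1),
            Q ^ (n + 1 - (i+1)) * (1 - Q ^ (i+1))
              * (Q ^ ((i+1) * ((i+1) + r)) / (P Q (i+1) * P Q (n + 1 - (i+1)) * P Q ((i+1) + r)))
            = Q ^ (n + r + 1)
              * (Q ^ (i * (i + (r+1))) / (P Q i * P Q (n - i) * P Q (i + (r+1)))) := by
          intro i hi
          have hi' : i ≤ n := by have := Finset.mem_range.mp hi; omega
          have e1 : n + 1 - (i + 1) = n - i := by omega
          have e2 : i + 1 + r = i + (r + 1) := by omega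
          have hpow : Q ^ (n - i) * Q ^ ((i+1) * ((i+1) + r))
              = Q ^ (n + r + 1) * Q ^ (i * (i + (r+1))) := by
            rw [← pow_add, ← pow_add]
            congr 1
            have : (i+1) * ((i+1) + r) = i * (i + (r+1)) + (i + r + 1) := by ring
            omega
          rw [e1, e2, P_succ]
          have h2 : (1:ℝ) - Q ^ (i + 1) ≠ 0 := one_sub_ne hQ0 hQ1 _
          have p1 := P_ne hQ0 hQ1 i
          have p2 := P_ne hQ0 hQ1 (n - i)
          have p3 := P_ne hQ0 hQ1 (i + (r + 1))
          field_simp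
          linear_combination hpow
        rw [Finset.sum_congr rfl hterm, ← Finset.mul_sum]
        have := ih (r + 1)
        have e3 : n + (r + 1) = n + r + 1 := by omega
        rw [e3] at this
        rw [this]
      rw [hA, hB]
    -- conclude
    have hPn1 : P Q (n + 1) = P Q n * (1 - Q ^ (n + 1)) := P_succ Q n
    have hPnr1 : P Q (n + 1 + r) = P Q (n + r) * (1 - Q ^ (n + r + 1)) := by
      have e : n + 1 + r = (n + r) + 1 := by omega
      rw [e, P_succ]
    have p1 := P_ne hQ0 hQ1 n
    have p2 := P_ne hQ0 hQ1 (n + r)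
    have hnr : (1:ℝ) - Q ^ (n + r + 1) ≠ 0 := one_sub_ne hQ0 hQ1 (n + r)
    have hgoal : ∑ j ∈ Finset.range (n + 2),
        Q ^ (j * (j + r)) / (P Q j * P Q (n + 1 - j) * P Q (j + r))
        = 1 / (P Q (n + 1) * P Q (n + 1 + r)) := by
      have hs := key
      rw [hPn1, hPnr1]
      rw [mul_comm] at hs
      rw [← eq_div_iff hne] at hs
      rw [hs, P_succ Q (n + r)]
      field_simp
      ring
    exact hgoal

end Anz

namespace Anz

lemma one_div_split {Q : ℝ} (hQ0 : 0 ≤ Q) (hQ1 : Q < 1) (b : ℕ) :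
    1 / P Q (b + 1) = 1 / P Q b + Q ^ (b + 1) / P Q (b + 1) := by
  rw [P_succ]
  have h1 := P_ne hQ0 hQ1 b
  have h2 := one_sub_ne hQ0 hQ1 b
  field_simp
  ring

noncomputable def ell (Q : ℝ) (n : ℕ) : ℝ :=
  ∑ j ∈ Finset.range (n + 1), Q ^ (j * (j + 1)) / (P Q j * P Q j * P Q (n - j))

noncomputable def RR (t : ℝ) (n : ℕ) : ℝ :=
  ∑ i ∈ Finset.range (n + 1), (-1 : ℝ) ^ i * t ^ (i * (i + 1)) / P (t ^ 2) (n - i)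

lemma durfee0 {Q : ℝ} (hQ0 : 0 ≤ Q) (hQ1 : Q < 1) (n : ℕ) :
    ∑ j ∈ Finset.range (n + 1), Q ^ (j * j) / (P Q j * P Q (n - j) * P Q j)
      = 1 / (P Q n * P Q n) := by
  have := durfee hQ0 hQ1 n 0
  simpa using this

lemma ell_step {Q : ℝ} (hQ0 : 0 ≤ Q) (hQ1 : Q < 1) (n : ℕ) :
    ell Q (n + 1) = ell Q n + Q ^ (n + 1) / (P Q (n + 1) * P Q (n + 1)) := by
  have pne : ∀ k, P Q k ≠ 0 := P_ne hQ0 hQ1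
  unfold ell
  rw [Finset.sum_range_succ]
  have hterm : ∀ j ∈ Finset.range (n + 1),
      Q ^ (j * (j + 1)) / (P Q j * P Q j * P Q (n + 1 - j))
      = Q ^ (j * (j + 1)) / (P Q j * P Q j * P Q (n - j))
        + Q ^ (n + 1) * (Q ^ (j * j) / (P Q j * P Q (n + 1 - j) * P Q j)) := by
    intro j hj
    have hj' : j ≤ n := by have := Finset.mem_range.mp hj; omega
    have e1 : n + 1 - j = (n - j) + 1 := by omega
    have hsplit : 1 / P Q (n + 1 - j) = 1 / P Q (n - j) + Q ^ (n + 1 - j) / P Q (n + 1 - j) := by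
      rw [e1]; exact one_div_split hQ0 hQ1 (n - j)
    have hpow : Q ^ (j * (j + 1)) * Q ^ (n + 1 - j) = Q ^ (n + 1) * Q ^ (j * j) := by
      rw [← pow_add, ← pow_add]
      congr 1
      have : j * (j + 1) = j * j + j := by ring
      omega
    linear_combination (Q ^ (j * (j+1)) / (P Q j * P Q j)) * hsplit
      + (1 / (P Q j * P Q j * P Q (n + 1 - j))) * hpow
  rw [Finset.sum_congr rfl hterm, Finset.sum_add_distrib, ← Finset.mul_sum]
  have hd := durfee0 hQ0 hQ1 (n + 1)
  rw [Finset.sum_range_succ] at hd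
  have e3 : n + 1 - (n + 1) = 0 := by omega
  rw [e3, P_zero] at hd
  have hsum : ∑ j ∈ Finset.range (n + 1), Q ^ (j * j) / (P Q j * P Q (n + 1 - j) * P Q j)
      = 1 / (P Q (n + 1) * P Q (n + 1))
        - Q ^ ((n+1) * (n+1)) / (P Q (n+1) * 1 * P Q (n+1)) := by
    linarith [hd]
  rw [hsum]
  have e4 : n + 1 - (n + 1) = 0 := by omega
  rw [e4, P_zero]
  have hpow2 : Q ^ (n + 1) * Q ^ ((n+1) * (n+1)) = Q ^ ((n+1) * (n+1+1)) := by
    rw [← pow_add]; congr 1; ring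
  linear_combination (1 / (P Q (n+1) * P Q (n+1))) * hpow2

lemma RR_step {t : ℝ} (ht0 : 0 ≤ t) (ht1 : t < 1) (n : ℕ) :
    RR t (n + 1) = (1 - (t ^ 2) ^ (n + 1)) * RR t n + (t ^ 2) ^ (n + 1) / P (t ^ 2) (n + 1) := by
  set Q : ℝ := t ^ 2 with hQ
  have hQ0 : 0 ≤ Q := sq_nonneg t
  have hQ1 : Q < 1 := by
    have : t * t < 1 := by nlinarith
    rw [hQ, sq]; exact this
  have pne : ∀ k, P Q k ≠ 0 := P_ne hQ0 hQ1
  have cstep : ∀ i : ℕ, (-1 : ℝ) ^ (i+1) * t ^ ((i+1) * (i+2))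
      = -(Q ^ (i+1) * ((-1:ℝ)^i * t ^ (i*(i+1)))) := by
    intro i
    have ht : t ^ ((i+1) * (i+2)) = t ^ (i * (i+1)) * Q ^ (i+1) := by
      rw [hQ, ← pow_mul, ← pow_add]
      congr 1; ring
    rw [ht, pow_succ]
    ring
  unfold RR
  rw [Finset.sum_range_succ]
  have hterm : ∀ i ∈ Finset.range (n + 1),
      (-1:ℝ) ^ i * t ^ (i * (i + 1)) / P Q (n + 1 - i)
      = (-1:ℝ) ^ i * t ^ (i * (i + 1)) / P Q (n - i)
        + Q ^ (n + 1 - i) * ((-1:ℝ) ^ i * t ^ (i * (i + 1))) / P Q (n + 1 - i) := by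
    intro i hi
    have hi' : i ≤ n := by have := Finset.mem_range.mp hi; omega
    have e1 : n + 1 - i = (n - i) + 1 := by omega
    have hsplit : 1 / P Q (n + 1 - i) = 1 / P Q (n - i) + Q ^ (n + 1 - i) / P Q (n + 1 - i) := by
      rw [e1]; exact one_div_split hQ0 hQ1 (n - i)
    linear_combination ((-1:ℝ) ^ i * t ^ (i * (i + 1))) * hsplit
  rw [Finset.sum_congr rfl hterm, Finset.sum_add_distrib]
  have hG : ∑ i ∈ Finset.range (n + 1),
      Q ^ (n + 1 - i) * ((-1:ℝ) ^ i * t ^ (i * (i + 1))) / P Q (n + 1 - i)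
      = -(Q ^ (n+1)) * (∑ i ∈ Finset.range n, (-1:ℝ)^i * t ^ (i*(i+1)) / P Q (n - i))
        + Q ^ (n+1) / P Q (n + 1) := by
    rw [Finset.sum_range_succ']
    have h0 : Q ^ (n + 1 - 0) * ((-1:ℝ) ^ 0 * t ^ (0 * (0 + 1))) / P Q (n + 1 - 0)
        = Q ^ (n+1) / P Q (n+1) := by norm_num
    rw [h0]
    have hterm2 : ∀ i ∈ Finset.range n,
        Q ^ (n + 1 - (i+1)) * ((-1:ℝ) ^ (i+1) * t ^ ((i+1) * ((i+1) + 1))) / P Q (n + 1 - (i+1))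
        = -(Q ^ (n+1)) * ((-1:ℝ)^i * t ^ (i*(i+1)) / P Q (n - i)) := by
      intro i hi
      have hi' : i < n := Finset.mem_range.mp hi
      have e1 : n + 1 - (i + 1) = n - i := by omega
      have e2 : i + 1 + 1 = i + 2 := rfl
      rw [e1, e2, cstep i]
      have hq2 : Q ^ (n - i) * Q ^ (i + 1) = Q ^ (n + 1) := by
        rw [← pow_add]; congr 1; omega
      linear_combination (-(((-1:ℝ)^i * t ^ (i*(i+1)))) / P Q (n - i)) * hq2
    rw [Finset.sum_congr rfl hterm2, ← Finset.mul_sum]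
  rw [hG]
  have hpeel : ∑ i ∈ Finset.range (n+1), (-1:ℝ)^i * t ^ (i*(i+1)) / P Q (n - i)
      = (∑ i ∈ Finset.range n, (-1:ℝ)^i * t ^ (i*(i+1)) / P Q (n - i))
        + (-1:ℝ)^n * t ^ (n*(n+1)) := by
    rw [Finset.sum_range_succ]
    have : n - n = 0 := by omega
    rw [this, P_zero, div_one]
  have e5 : n + 1 - (n + 1) = 0 := by omega
  rw [e5, P_zero, cstep n, hpeel]
  ring

lemma bridge {t : ℝ} (ht0 : 0 ≤ t) (ht1 : t < 1) (n : ℕ) :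
    P (t ^ 2) n * ell (t ^ 2) n = RR t n := by
  set Q : ℝ := t ^ 2 with hQ
  have hQ0 : 0 ≤ Q := sq_nonneg t
  have hQ1 : Q < 1 := by
    have : t * t < 1 := by nlinarith
    rw [hQ, sq]; exact this
  have pne : ∀ k, P Q k ≠ 0 := P_ne hQ0 hQ1
  induction n with
  | zero => simp [ell, RR, P_zero]
  | succ n ih =>
    rw [ell_step hQ0 hQ1, RR_step ht0 ht1, ← ih, P_succ, ← hQ]
    have h1 := pne n
    have h2 : (1:ℝ) - Q ^ (n + 1) ≠ 0 := one_sub_ne hQ0 hQ1 n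
    field_simp

lemma P_add (Q : ℝ) (a s : ℕ) : P Q (a + s) = P Q a * qPoch (Q ^ (a + 1)) Q s := by
  unfold P qPoch
  rw [Finset.prod_range_add]
  congr 1
  refine Finset.prod_congr rfl fun i _ => ?_
  rw [← pow_add]
  congr 2
  omega

end Anz

open Anz

theorem anzanello_d_sum (q : ℝ) (hq : 1 < q) (m : ℕ) (hm : 1 ≤ m) :
    ∑ k ∈ Finset.Icc 1 m,
      1 / (q ^ (2 * k ^ 2 - k) * qPoch (q ^ (-2 : ℤ)) (q ^ (-2 : ℤ)) (k - 1))
        * (qPoch (q ^ (-(2 * (k : ℤ)))) (q ^ (-2 : ℤ)) (m - k)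
            / qPoch (q ^ (-2 : ℤ)) (q ^ (-2 : ℤ)) (m - k))
        * q ^ (-((m : ℤ) - k))
    = 1 / q ^ m * ∑ i ∈ Finset.Icc 1 m,
        (-1 : ℝ) ^ (i - 1)
          / (q ^ (i * (i - 1)) * qPoch (q ^ (-2 : ℤ)) (q ^ (-2 : ℤ)) (m - i)) := by
  obtain ⟨n, rfl⟩ : ∃ n, m = n + 1 := ⟨m - 1, by omega⟩
  have hq0 : (0:ℝ) < q := by linarith
  have hqne : q ≠ 0 := ne_of_gt hq0
  obtain ⟨t, htdef⟩ : ∃ t : ℝ, t = q⁻¹ := ⟨q⁻¹, rfl⟩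
  have ht0 : 0 < t := by rw [htdef]; positivity
  have ht1 : t < 1 := by rw [htdef]; exact inv_lt_one_of_one_lt₀ hq
  have htne : t ≠ 0 := ne_of_gt ht0
  have hqt : q = t⁻¹ := by rw [htdef, inv_inv]
  obtain ⟨Q, hQdef⟩ : ∃ Q : ℝ, Q = t ^ 2 := ⟨t ^ 2, rfl⟩
  have hQ0 : 0 ≤ Q := by rw [hQdef]; positivity
  have hQ1 : Q < 1 := by
    have : t * t < 1 := by nlinarith
    rw [hQdef, sq]; exact this
  have pne : ∀ k, P Q k ≠ 0 := P_ne hQ0 hQ1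
  have hA : q ^ (-2 : ℤ) = Q := by
    rw [hqt, hQdef, inv_zpow, ← zpow_neg, neg_neg]
    norm_cast
  rw [hA]
  rw [← Finset.Ico_add_one_right_eq_Icc, Finset.sum_Ico_eq_sum_range, Finset.sum_Ico_eq_sum_range]
  simp only [Nat.add_sub_cancel]
  have hL : ∑ j ∈ Finset.range (n + 1),
      1 / (q ^ (2 * (1 + j) ^ 2 - (1 + j)) * qPoch Q Q (1 + j - 1))
        * (qPoch (q ^ (-(2 * ((1 + j : ℕ) : ℤ)))) Q (n + 1 - (1 + j))
            / qPoch Q Q (n + 1 - (1 + j)))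
        * q ^ (-(((n + 1 : ℕ) : ℤ) - ((1 + j : ℕ) : ℤ)))
      = t ^ (n + 1) * (P Q n * ell Q n) := by
    unfold ell
    rw [Finset.mul_sum, Finset.mul_sum]
    refine Finset.sum_congr rfl fun j hj => ?_
    have hj' : j ≤ n := by have := Finset.mem_range.mp hj; omega
    have e0 : 1 + j - 1 = j := by omega
    have e1 : n + 1 - (1 + j) = n - j := by omega
    have e2 : 2 * (1 + j) ^ 2 - (1 + j) = 2 * j ^ 2 + 3 * j + 1 := by
      have : 2 * (1 + j) ^ 2 = 2 * j ^ 2 + 4 * j + 2 := by ring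
      omega
    have hz1 : q ^ (-(2 * ((1 + j : ℕ) : ℤ))) = Q ^ (1 + j) := by
      rw [hqt, hQdef]
      rw [show (-(2 * ((1 + j : ℕ) : ℤ))) = (-2) * ((1 + j : ℕ) : ℤ) by ring, zpow_mul]
      norm_num
      rw [← zpow_natCast (t ^ 2) (1 + j)]
      norm_cast
    have hz2 : q ^ (-(((n + 1 : ℕ) : ℤ) - ((1 + j : ℕ) : ℤ))) = t ^ (n - j) := by
      have ec : -(((n + 1 : ℕ) : ℤ) - ((1 + j : ℕ) : ℤ)) = -(((n - j : ℕ) : ℤ)) := by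
        push_cast; omega
      rw [ec, hqt, zpow_neg, inv_zpow, inv_inv, zpow_natCast]
    have hsplit : P Q n = P Q j * qPoch (Q ^ (1 + j)) Q (n - j) := by
      rw [show 1 + j = j + 1 by omega, ← P_add]
      congr 1
      omega
    rw [e0, e1, e2, hz1, hz2, qPoch_eq_P, qPoch_eq_P]
    have hqe : q ^ (2 * j ^ 2 + 3 * j + 1) = (t ^ (2 * j ^ 2 + 3 * j + 1))⁻¹ := by
      rw [hqt, inv_pow]
    rw [hqe]
    have hpq : qPoch (Q ^ (1 + j)) Q (n - j) = P Q n / P Q j := by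
      rw [eq_div_iff (pne j), mul_comm]
      exact hsplit.symm
    rw [hpq]
    have hpow : t ^ (2 * j ^ 2 + 3 * j + 1) * t ^ (n - j)
        = t ^ (n + 1) * Q ^ (j * (j + 1)) := by
      rw [hQdef, ← pow_mul, ← pow_add, ← pow_add]
      congr 1
      have : 2 * (j * (j + 1)) = 2 * j ^ 2 + 2 * j := by ring
      omega
    have htp : (t : ℝ) ^ (2 * j ^ 2 + 3 * j + 1) ≠ 0 := pow_ne_zero _ htne
    have p1 := pne j
    have p2 := pne (n - j)
    have p3 := pne n
    field_simp
    linear_combination hpow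
  have hR : ∑ j ∈ Finset.range (n + 1),
      (-1 : ℝ) ^ (1 + j - 1)
        / (q ^ ((1 + j) * (1 + j - 1)) * qPoch Q Q (n + 1 - (1 + j)))
      = RR t n := by
    unfold RR
    rw [← hQdef]
    refine Finset.sum_congr rfl fun j hj => ?_
    have e0 : 1 + j - 1 = j := by omega
    have e1 : n + 1 - (1 + j) = n - j := by omega
    rw [e0, e1, qPoch_eq_P]
    rw [show (1 + j) * j = j * (j + 1) by ring]
    have hqe : q ^ (j * (j + 1)) = (t ^ (j * (j + 1)))⁻¹ := by
      rw [hqt, inv_pow]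
    rw [hqe]
    have p1 := pne (n - j)
    have htp : (t : ℝ) ^ (j * (j + 1)) ≠ 0 := pow_ne_zero _ htne
    field_simp
  rw [hL, hR]
  have hmq : 1 / q ^ (n + 1) = t ^ (n + 1) := by
    rw [hqt, inv_pow, one_div, inv_inv]
  rw [hmq]
  have hb := bridge ht0.le ht1 n
  rw [← hQdef] at hb
  rw [hb]
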